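/- arXiv:0708.4389 — 5 statements merged into one kernel-verified Lean document; each statement's English description precedes it below -/
import Mathlib

section
/- Define the singular words w_n by w_n = a · s_n · b^{-1} if n is odd and w_n = b · s_n · a^{-1} if n is even (that is, w_n is s_n with its last letter removed and the appropriate letter prepended), where (s_n) is a standard sequence. Then each w_n is a palindrome for all n ≥ 0. -/
/-- Letters: `a` is `false`, `b` is `true`. -/
abbrev Word := List Bool

/-- `wpow w k` is the `k`-fold concatenation `w^k`. -/
def wpow (w : Word) (k : ℕ) : Word := (List.replicate k w).flatten

/-- the final two letters of `sₙ` : `ab` for odd `n`, `ba` for even `n`. -/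
def uu (n : ℤ) : Word := if Odd n then [false, true] else [true, false]

lemma uu_add_two (n : ℤ) : uu (n + 2) = uu n := by
  simp [uu, Int.odd_add]

lemma uu_reverse (n : ℤ) : (uu n).reverse = uu (n + 1) := by
  rcases Int.even_or_odd n with h | h
  · have h1 : Odd (n + 1) := Even.add_one h
    have h2 : ¬ Odd n := by simpa [Int.not_odd_iff_even] using h
    simp [uu, h1, h2]
  · have h1 : ¬ Odd (n + 1) := by
      simpa [Int.not_odd_iff_even] using Odd.add_one h
    simp [uu, h1, h]

lemma wpow_succ (w : Word) (k : ℕ) : wpow w (k + 1) = w ++ wpow w k := by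
  simp [wpow, List.replicate_succ]

lemma wpow_succ' (w : Word) (k : ℕ) : wpow w (k + 1) = wpow w k ++ w := by
  induction k with
  | zero => simp [wpow]
  | succ k ih =>
      conv_lhs => rw [wpow_succ w (k + 1), ih]
      rw [← List.append_assoc, ← wpow_succ]

lemma wpow_comm (w : Word) (k : ℕ) : w ++ wpow w k = wpow w k ++ w := by
  rw [← wpow_succ, wpow_succ']

lemma wpow_reverse (w : Word) (k : ℕ) :
    (wpow w k).reverse = wpow w.reverse k := by
  induction k with
  | zero => simp [wpow]
  | succ k ih => rw [wpow_succ, List.reverse_append, ih, wpow_succ']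

lemma wpow_singleton (c : Bool) (k : ℕ) :
    wpow [c] k = List.replicate k c := by
  induction k with
  | zero => simp [wpow]
  | succ k ih => rw [wpow_succ, ih, List.replicate_succ]; rfl

/-- The key conjugation lemma. -/
lemma wpow_conj (x u y v : Word) (h : x ++ (u ++ y) = y ++ (v ++ x)) :
    ∀ k : ℕ, x ++ wpow (u ++ y) k = wpow (y ++ v) k ++ x := by
  intro k
  induction k with
  | zero => simp [wpow]
  | succ k ih =>
      have h2 : x ++ wpow (u ++ y) (k + 1) = (y ++ v) ++ (x ++ wpow (u ++ y) k) := by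
        rw [wpow_succ, ← List.append_assoc, h]; simp [List.append_assoc]
      rw [h2, ih, ← List.append_assoc, wpow_comm, wpow_succ']

/-- Each singular word `wₙ` (`sₙ` with its last letter removed and the letter `a`
(if `n` odd) or `b` (if `n` even) prepended) is a palindrome, for all `n ≥ 0`. -/
theorem singular_word_palindrome (d : ℤ → ℕ) (s : ℤ → Word)
    (hd : ∀ n : ℤ, 1 ≤ n → 1 ≤ d n)
    (hs1 : s (-1) = [true]) (hs0 : s 0 = [false])
    (hs : ∀ n : ℤ, 1 ≤ n → s n = wpow (s (n - 1)) (d n) ++ s (n - 2))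
    (w : ℤ → Word)
    (hw : ∀ n : ℤ, 0 ≤ n → w n = (if Odd n then [false] else [true]) ++ (s n).dropLast)
    (hwm1 : w (-1) = [false]) (hwm2 : w (-2) = []) :
    ∀ n : ℤ, 0 ≤ n → (w n).Palindrome := by
  -- convenient form of the recurrence
  have hs' : ∀ n : ℤ, 0 ≤ n → s (n + 1) = wpow (s n) (d (n + 1)) ++ s (n - 1) := by
    intro n hn
    have h := hs (n + 1) (by omega)
    have e1 : n + 1 - 1 = n := by ring
    have e2 : n + 1 - 2 = n - 1 := by ring
    rwa [e1, e2] at h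
  -- Fact C : almost-commutation of consecutive standard words
  have hC : ∀ n : ℤ, 0 ≤ n →
      ∃ G : Word, s n ++ s (n - 1) = G ++ uu (n - 1) ∧ s (n - 1) ++ s n = G ++ uu n := by
    refine Int.le_induction ?_ ?_
    · refine ⟨[], ?_, ?_⟩
      · have : Odd (0 - 1 : ℤ) := by decide
        simp [hs0, hs1, uu, this]
      · have : ¬ Odd (0 : ℤ) := by decide
        simp [hs0, hs1, uu, this]
    · intro n hn ih
      obtain ⟨G, hG1, hG2⟩ := ih
      have e1 : n + 1 - 1 = n := by ring
      have hr := hs' n hn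
      refine ⟨wpow (s n) (d (n + 1)) ++ G, ?_, ?_⟩
      · rw [e1, hr]
        rw [List.append_assoc, hG2, ← List.append_assoc]
      · rw [e1, hr, ← List.append_assoc, wpow_comm, List.append_assoc, hG1,
          ← List.append_assoc]
        have : uu (n - 1) = uu (n + 1) := by
          rw [← uu_add_two (n - 1)]; ring_nf
        rw [this]
  -- Fact P : sₙ = (palindrome) ++ uu n for n ≥ 1
  have hP : ∀ n : ℤ, 1 ≤ n → ∃ p : Word, s n = p ++ uu n ∧ p.reverse = p := by
    have key : ∀ n : ℤ, 1 ≤ n →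
        (∃ p : Word, s n = p ++ uu n ∧ p.reverse = p) ∧
        (∃ p : Word, s (n + 1) = p ++ uu (n + 1) ∧ p.reverse = p) := by
      refine Int.le_induction ?_ ?_
      · obtain ⟨m, hm⟩ : ∃ m, d 1 = m + 1 := ⟨d 1 - 1, by have := hd 1 le_rfl; omega⟩
        have hodd1 : Odd (1 : ℤ) := ⟨0, by ring⟩
        have hs1' : s 1 = List.replicate (d 1) false ++ [true] := by
          have h := hs' 0 le_rfl
          simp only [zero_add, zero_sub] at h
          rw [h, hs0, hs1, wpow_singleton]
        constructor
        · refine ⟨List.replicate m false, ?_, by simp⟩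
          rw [hs1', hm, List.replicate_succ', uu, if_pos hodd1]
          simp
        · -- n = 2
          rw [show (1 : ℤ) + 1 = 2 from by norm_num]
          obtain ⟨m2, hm2⟩ : ∃ m2, d 2 = m2 + 1 := ⟨d 2 - 1, by have := hd 2 (by norm_num); omega⟩
          have h2 : s 2 = wpow (s 1) (d 2) ++ s 0 := by
            have h := hs' 1 (by norm_num)
            norm_num at h
            rwa [hs0] at h ⊢
          set X : Word := List.replicate (d 1) false with hX
          have hnotodd2 : ¬ Odd (2 : ℤ) := by decide
          refine ⟨wpow (X ++ [true]) m2 ++ X, ?_, ?_⟩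
          · rw [h2, hs0, hm2, wpow_succ', hs1', uu, if_neg hnotodd2]
            simp [List.append_assoc]
          · rw [List.reverse_append, wpow_reverse, List.reverse_append]
            have hXrev : X.reverse = X := by simp [hX]
            rw [hXrev]
            have : X ++ wpow ([true].reverse ++ X) m2 = wpow (X ++ [true]) m2 ++ X := by
              apply wpow_conj
              simp
            simpa using this
      · intro n hn ih
        obtain ⟨⟨p, hp, hprev⟩, ⟨q, hq, hqrev⟩⟩ := ih
        refine ⟨⟨q, hq, hqrev⟩, ?_⟩
        rw [show n + 1 + 1 = n + 2 from by ring]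
        -- prove the claim for n + 2
        obtain ⟨G, hG1, hG2⟩ := hC (n + 1) (by omega)
        have e1 : n + 1 - 1 = n := by ring
        rw [e1] at hG1 hG2
        have hGa : s (n + 1) ++ p = G := by
          apply List.append_cancel_right (as := s (n + 1) ++ p) (bs := uu n)
          rw [List.append_assoc, ← hp, hG1]
        have hGb : s n ++ q = G := by
          apply List.append_cancel_right (as := s n ++ q) (bs := uu (n + 1))
          rw [List.append_assoc, ← hq, hG2]
        have hcond : p ++ (uu n ++ q) = q ++ (uu (n + 1) ++ p) := by
          rw [← List.append_assoc, ← hp, hGb, ← List.append_assoc, ← hq, hGa]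
        have hrec : s (n + 2) = wpow (s (n + 1)) (d (n + 2)) ++ s n := by
          have h := hs' (n + 1) (by omega)
          rw [show n + 1 + 1 = n + 2 from by ring, show n + 1 - 1 = n from by ring] at h
          exact h
        refine ⟨wpow (s (n + 1)) (d (n + 2)) ++ p, ?_, ?_⟩
        · rw [hrec, hp, uu_add_two, List.append_assoc]
        · rw [List.reverse_append, hprev, wpow_reverse]
          have hsrev : (s (n + 1)).reverse = uu n ++ q := by
            rw [hq, List.reverse_append, hqrev, uu_reverse,
              show n + 1 + 1 = n + 2 from by ring, uu_add_two]
          rw [hsrev, wpow_conj p (uu n) q (uu (n + 1)) hcond, ← hq]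
    intro n hn
    exact (key n hn).1
  -- final assembly
  intro n hn
  rcases eq_or_lt_of_le hn with h0 | h1
  · -- n = 0
    have hnotodd : ¬ Odd (0 : ℤ) := by decide
    have : w 0 = [true] := by
      rw [hw 0 le_rfl, hs0, if_neg hnotodd]
      rfl
    rw [← h0, this]
    exact List.Palindrome.singleton true
  · obtain ⟨p, hsp, hprev⟩ := hP n h1
    have hwn := hw n hn
    apply List.Palindrome.of_reverse_eq
    rcases Int.even_or_odd n with he | ho
    · have hnotodd : ¬ Odd n := by simpa [Int.not_odd_iff_even] using he
      have huu : uu n = [true, false] := by rw [uu, if_neg hnotodd]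
      have hdl : (s n).dropLast = p ++ [true] := by
        rw [hsp, huu, show p ++ [true, false] = (p ++ [true]) ++ [false] by simp,
          List.dropLast_concat]
      rw [hwn, if_neg hnotodd, hdl]
      simp [hprev]
    · have huu : uu n = [false, true] := by rw [uu, if_pos ho]
      have hdl : (s n).dropLast = p ++ [false] := by
        rw [hsp, huu, show p ++ [false, true] = (p ++ [false]) ++ [true] by simp,
          List.dropLast_concat]
      rw [hwn, if_pos ho, hdl]
      simp [hprev]
end

section
/- For all n ≥ 0, the singular words satisfy w_{n+1} = w_{n-1} v_{n-2} v_{n-1} = v_{n-1} v_{n-2} w_{n-1}. -/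
/-- The last letter of `sₙ` is `a` (false) if `n` is even, `b` (true) if `n` is odd. -/
lemma slast_aux (d : ℤ → ℕ) (s : ℤ → Word)
    (hs1 : s (-1) = [true]) (hs0 : s 0 = [false])
    (hs : ∀ n : ℤ, 1 ≤ n → s n = wpow (s (n - 1)) (d n) ++ s (n - 2)) :
    ∀ k : ℕ, s ((k : ℤ) - 1) =
      (s ((k : ℤ) - 1)).dropLast ++ (if Odd (k : ℤ) then [false] else [true]) := by
  intro k
  induction k using Nat.strong_induction_on with
  | _ k ih =>
    match k with
    | 0 => norm_num [hs1]
    | 1 => norm_num [hs0]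
    | (k+2) =>
      have e : ((k + 2 : ℕ) : ℤ) - 1 = (k : ℤ) + 1 := by push_cast; ring
      rw [e, hs ((k : ℤ) + 1) (by omega)]
      have e2 : (k : ℤ) + 1 - 2 = (k : ℤ) - 1 := by ring
      rw [e2, ih k (by omega)]
      have hpar : Odd ((k + 2 : ℕ) : ℤ) ↔ Odd ((k : ℤ)) := by
        rw [Int.odd_iff, Int.odd_iff]; push_cast; omega
      by_cases h : Odd ((k : ℤ))
      · rw [if_pos h, if_pos (hpar.mpr h), ← List.append_assoc, List.dropLast_concat]
      · rw [if_neg h, if_neg (fun hh => h (hpar.mp hh)), ← List.append_assoc,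
          List.dropLast_concat]

/-- The purely combinatorial core of the decomposition. -/
lemma aux_calc (u t A B X Y s1 s2 sn P : Word)
    (h1 : s1 = A ++ t) (h2 : s2 = B ++ u) (h3 : sn = s1 ++ X ++ s2)
    (h4 : P = sn ++ Y) (h5 : P = Y ++ sn) :
    u ++ (P ++ A) = (u ++ A) ++ (t ++ (X ++ B)) ++ (u ++ (Y ++ A)) ∧
    u ++ (P ++ A) = (u ++ (Y ++ A)) ++ (t ++ (X ++ B)) ++ (u ++ A) := by
  subst h1 h2 h3
  constructor
  · rw [h4]; simp [List.append_assoc]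
  · rw [h5]; simp [List.append_assoc]

/-- For all `n ≥ 0`, `wₙ₊₁ = wₙ₋₁ vₙ₋₂ vₙ₋₁ = vₙ₋₁ vₙ₋₂ wₙ₋₁`. -/
theorem singular_word_decomposition (d : ℤ → ℕ) (s : ℤ → Word)
    (hd : ∀ n : ℤ, 1 ≤ n → 1 ≤ d n)
    (hs1 : s (-1) = [true]) (hs0 : s 0 = [false])
    (hs : ∀ n : ℤ, 1 ≤ n → s n = wpow (s (n - 1)) (d n) ++ s (n - 2))
    (w : ℤ → Word)
    (hw : ∀ n : ℤ, 0 ≤ n → w n = (if Odd n then [false] else [true]) ++ (s n).dropLast)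
    (hwm1 : w (-1) = [false]) (hwm2 : w (-2) = [])
    (v : ℤ → Word)
    (hv : ∀ n : ℤ, -1 ≤ n → v n = (if Odd n then [false] else [true]) ++ (wpow (s (n + 1)) (d (n + 2) - 1) ++ s n).dropLast)
    (hvm2 : v (-2) = []) :
    ∀ n : ℤ, 0 ≤ n →
      w (n + 1) = w (n - 1) ++ v (n - 2) ++ v (n - 1) ∧
      w (n + 1) = v (n - 1) ++ v (n - 2) ++ w (n - 1) := by
  have slast : ∀ m : ℤ, 0 ≤ m + 1 →
      s m = (s m).dropLast ++ (if Odd (m + 1) then [false] else [true]) := by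
    intro m hm
    have h := slast_aux d s hs1 hs0 hs (m + 1).toNat
    rwa [Int.toNat_of_nonneg hm, add_sub_cancel_right] at h
  intro n hn
  rcases eq_or_lt_of_le hn with h0 | h1
  · -- case n = 0
    subst h0
    simp only [show (0 : ℤ) + 1 = 1 from by norm_num, show (0 : ℤ) - 1 = -1 from by norm_num,
      show (0 : ℤ) - 2 = -2 from by norm_num]
    have hs1' : s 1 = wpow (s 0) (d 1) ++ s (-1) := by
      have h := hs 1 le_rfl
      norm_num at h
      exact h
    have w1 : w 1 = [false] ++ wpow [false] (d 1) := by
      rw [hw 1 (by omega), if_pos (by decide : Odd (1 : ℤ)), hs1', hs0, hs1,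
        List.dropLast_concat]
    have v1 : v (-1) = [false] ++ wpow [false] (d 1 - 1) := by
      rw [hv (-1) (by omega), if_pos (by decide : Odd (-1 : ℤ))]
      norm_num [hs0, hs1, List.dropLast_concat]
    obtain ⟨e, he⟩ : ∃ e, d 1 = e + 1 := ⟨d 1 - 1, by have := hd 1 le_rfl; omega⟩
    have he' : d 1 - 1 = e := by omega
    rw [w1, hwm1, hvm2, v1, he', he]
    exact ⟨by rw [wpow_succ]; simp, by rw [wpow_succ']; simp⟩
  · -- case n ≥ 1
    have hn1 : 1 ≤ n := h1
    obtain ⟨p, hp⟩ : ∃ p, d n = p + 1 := ⟨d n - 1, by have := hd n hn1; omega⟩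
    obtain ⟨q, hq⟩ : ∃ q, d (n + 1) = q + 1 := ⟨d (n + 1) - 1, by have := hd (n + 1) (by omega); omega⟩
    have hparA : Odd (n + 1) ↔ Odd (n - 1) := by rw [Int.odd_iff, Int.odd_iff]; omega
    have hparB : Odd (n - 2) ↔ Odd n := by rw [Int.odd_iff, Int.odd_iff]; omega
    have hpar1 : (if Odd (n + 1) then ([false] : Word) else [true]) =
        (if Odd (n - 1) then ([false] : Word) else [true]) := if_congr hparA rfl rfl
    have hpar2 : (if Odd (n - 2) then ([false] : Word) else [true]) =
        (if Odd n then ([false] : Word) else [true]) := if_congr hparB rfl rfl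
    have dlt : ∀ x : Word,
        (x ++ (if Odd n then ([false] : Word) else [true])).dropLast = x := by
      intro x
      by_cases h : Odd n
      · rw [if_pos h]; exact List.dropLast_concat
      · rw [if_neg h]; exact List.dropLast_concat
    have dlu : ∀ x : Word,
        (x ++ (if Odd (n - 1) then ([false] : Word) else [true])).dropLast = x := by
      intro x
      by_cases h : Odd (n - 1)
      · rw [if_pos h]; exact List.dropLast_concat
      · rw [if_neg h]; exact List.dropLast_concat
    have sA : s (n - 1) = (s (n - 1)).dropLast ++ (if Odd n then [false] else [true]) := by
      have h := slast (n - 1) (by omega)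
      rwa [show n - 1 + 1 = n from by ring] at h
    have sB : s (n - 2) = (s (n - 2)).dropLast ++ (if Odd (n - 1) then [false] else [true]) := by
      have h := slast (n - 2) (by omega)
      rwa [show n - 2 + 1 = n - 1 from by ring] at h
    obtain ⟨A, hA1, hA2⟩ : ∃ A : Word, (s (n - 1)).dropLast = A ∧
        s (n - 1) = A ++ (if Odd n then [false] else [true]) :=
      ⟨(s (n - 1)).dropLast, rfl, sA⟩
    obtain ⟨B, hB1, hB2⟩ : ∃ B : Word, (s (n - 2)).dropLast = B ∧
        s (n - 2) = B ++ (if Odd (n - 1) then [false] else [true]) :=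
      ⟨(s (n - 2)).dropLast, rfl, sB⟩
    have hsnp1 : s (n + 1) = wpow (s n) (d (n + 1)) ++ s (n - 1) := by
      have h := hs (n + 1) (by omega)
      rwa [show n + 1 - 1 = n from by ring, show n + 1 - 2 = n - 1 from by ring] at h
    have hsnE : s n = s (n - 1) ++ wpow (s (n - 1)) p ++ s (n - 2) := by
      rw [hs n hn1, hp, wpow_succ]
    have hP1 : wpow (s n) (d (n + 1)) = s n ++ wpow (s n) q := by
      rw [hq, wpow_succ]
    have hP2 : wpow (s n) (d (n + 1)) = wpow (s n) q ++ s n := by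
      rw [hq, wpow_succ']
    have hw1 : w (n + 1) = (if Odd (n - 1) then ([false] : Word) else [true]) ++
        (wpow (s n) (d (n + 1)) ++ A) := by
      rw [hw (n + 1) (by omega), hpar1, hsnp1, hA2, ← List.append_assoc, dlt]
    have hwm : w (n - 1) = (if Odd (n - 1) then ([false] : Word) else [true]) ++ A := by
      rw [hw (n - 1) (by omega), hA1]
    have hv2 : v (n - 2) = (if Odd n then ([false] : Word) else [true]) ++
        (wpow (s (n - 1)) p ++ B) := by
      rw [hv (n - 2) (by omega), hpar2, show n - 2 + 1 = n - 1 from by ring,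
        show n - 2 + 2 = n from by ring, show d n - 1 = p from by omega, hB2,
        ← List.append_assoc, dlu]
    have hv1 : v (n - 1) = (if Odd (n - 1) then ([false] : Word) else [true]) ++
        (wpow (s n) q ++ A) := by
      rw [hv (n - 1) (by omega), show n - 1 + 1 = n from by ring,
        show n - 1 + 2 = n + 1 from by ring, show d (n + 1) - 1 = q from by omega, hA2,
        ← List.append_assoc, dlt]
    rw [hw1, hwm, hv2, hv1]
    exact aux_calc _ _ A B (wpow (s (n - 1)) p) (wpow (s n) q) (s (n - 1)) (s (n - 2))
      (s n) (wpow (s n) (d (n + 1))) hA2 hB2 hsnE hP1 hP2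
end

section
/- For all n ≥ 0, w_{n+1} = y · v_{-1} v_0 v_1 ⋯ v_{n-1}, where y is the first letter of w_{n+1} (i.e., y = a if n+1 odd, y = b if n+1 even), and the product denotes concatenation of the adjoining singular words v_j for j = -1, 0, …, n-1. -/
/-- For all `n ≥ 0`, `wₙ₊₁ = y · v₋₁ v₀ v₁ ⋯ vₙ₋₁`, where `y` is the first letter
of `wₙ₊₁` (`a` if `n+1` is odd, `b` if `n+1` is even). -/
theorem singular_word_as_product (d : ℤ → ℕ) (s : ℤ → Word)
    (hd : ∀ n : ℤ, 1 ≤ n → 1 ≤ d n)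
    (hs1 : s (-1) = [true]) (hs0 : s 0 = [false])
    (hs : ∀ n : ℤ, 1 ≤ n → s n = wpow (s (n - 1)) (d n) ++ s (n - 2))
    (w : ℤ → Word)
    (hw : ∀ n : ℤ, 0 ≤ n → w n = (if Odd n then [false] else [true]) ++ (s n).dropLast)
    (hwm1 : w (-1) = [false]) (hwm2 : w (-2) = [])
    (v : ℤ → Word)
    (hv : ∀ n : ℤ, -1 ≤ n → v n = (if Odd n then [false] else [true]) ++ (wpow (s (n + 1)) (d (n + 2) - 1) ++ s n).dropLast)
    (hvm2 : v (-2) = []) :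
    ∀ n : ℕ, w ((n : ℤ) + 1) =
      (if Odd ((n : ℤ) + 1) then [false] else [true]) ++
        ((List.range (n + 1)).map fun i => v ((i : ℤ) - 1)).flatten := by
  -- s N ends with the letter `if Odd N then true else false`, for N ≥ -1
  have keyN : ∀ m : ℕ, ∃ t : Word,
      s ((m : ℤ) - 1) = t ++ [if Odd ((m : ℤ) - 1) then true else false] := by
    intro m
    induction m using Nat.strong_induction_on with
    | _ m ih =>
      match m with
      | 0 =>
        refine ⟨[], ?_⟩
        norm_num [hs1]
      | 1 =>
        refine ⟨[], ?_⟩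
        norm_num [hs0]
      | (m + 2) =>
        obtain ⟨t, ht⟩ := ih m (by omega)
        have hrec := hs ((m : ℤ) + 1) (by omega)
        rw [show (m : ℤ) + 1 - 1 = (m : ℤ) from by ring,
            show (m : ℤ) + 1 - 2 = (m : ℤ) - 1 from by ring] at hrec
        refine ⟨wpow (s (m : ℤ)) (d ((m : ℤ) + 1)) ++ t, ?_⟩
        rw [show ((m + 2 : ℕ) : ℤ) - 1 = (m : ℤ) + 1 from by push_cast; ring]
        have hpar : Odd ((m : ℤ) + 1) = Odd ((m : ℤ) - 1) := by
          rw [eq_iff_iff, Int.odd_iff, Int.odd_iff]; omega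
        rw [hrec, ht, List.append_assoc]
        simp only [hpar]
  have key : ∀ N : ℤ, -1 ≤ N → ∃ t : Word,
      s N = t ++ [if Odd N then true else false] := by
    intro N hN
    obtain ⟨m, hm⟩ : ∃ m : ℕ, N = (m : ℤ) - 1 := ⟨(N + 1).toNat, by omega⟩
    subst hm
    exact keyN m
  -- the crucial dropLast identity
  have hds : ∀ N : ℤ, 0 ≤ N →
      (s (N + 1)).dropLast = (s N).dropLast ++ v (N - 1) := by
    intro N hN
    obtain ⟨t, ht⟩ := key N (by omega)
    obtain ⟨t', ht'⟩ := key (N - 1) (by omega)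
    have hne : s (N - 1) ≠ [] := by rw [ht']; simp
    have hrec := hs (N + 1) (by omega)
    rw [show N + 1 - 1 = N from by ring, show N + 1 - 2 = N - 1 from by ring] at hrec
    obtain ⟨k, hk⟩ := Nat.exists_eq_add_of_le (hd (N + 1) (by omega))
    have hk' : d (N + 1) = k + 1 := by omega
    have hkk : d (N + 1) - 1 = k := by omega
    have hvv := hv (N - 1) (by omega)
    rw [show N - 1 + 1 = N from by ring, show N - 1 + 2 = N + 1 from by ring, hkk] at hvv
    have hL : (if Odd (N - 1) then ([false] : Word) else [true]) =
        [if Odd N then true else false] := by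
      by_cases h : Odd N
      · have h' : ¬ Odd (N - 1) := by rw [Int.odd_iff] at h ⊢; omega
        simp [h, h']
      · have h' : Odd (N - 1) := by rw [Int.odd_iff] at h ⊢; omega
        simp [h, h']
    calc (s (N + 1)).dropLast
        = wpow (s N) (d (N + 1)) ++ (s (N - 1)).dropLast := by
          rw [hrec, List.dropLast_append_of_ne_nil hne]
      _ = (t ++ [if Odd N then true else false]) ++ (wpow (s N) k ++ (s (N - 1)).dropLast) := by
          rw [hk', wpow_succ, ← ht]; simp [List.append_assoc]
      _ = (s N).dropLast ++ v (N - 1) := by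
          rw [hvv, List.dropLast_append_of_ne_nil hne, hL, ht, List.dropLast_concat]
          simp [List.append_assoc]
  -- main induction
  intro n
  induction n with
  | zero =>
    have h0 := hds 0 le_rfl
    have hw1 := hw 1 (by omega)
    norm_num [hs0] at h0
    simp only [Nat.cast_zero, zero_add]
    rw [hw1, h0]
    have : ((0:ℕ) : ℤ) - 1 = -1 := by norm_num
    simp [show List.range 1 = [0] from rfl, this]
  | succ n ih =>
    have hw2 := hw ((n : ℤ) + 2) (by omega)
    have hw1 := hw ((n : ℤ) + 1) (by omega)
    rw [hw1] at ih
    have hjoin : (s ((n : ℤ) + 1)).dropLast =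
        ((List.range (n + 1)).map fun i => v ((i : ℤ) - 1)).flatten :=
      List.append_cancel_left ih
    have hd1 := hds ((n : ℤ) + 1) (by omega)
    rw [show (n : ℤ) + 1 + 1 = (n : ℤ) + 2 from by ring,
        show (n : ℤ) + 1 - 1 = (n : ℤ) from by ring] at hd1
    rw [show ((n + 1 : ℕ) : ℤ) = (n : ℤ) + 1 from by push_cast; ring,
        show (n : ℤ) + 1 + 1 = (n : ℤ) + 2 from by ring, hw2, hd1, hjoin]
    simp [List.range_succ, show ((n + 1 : ℕ) : ℤ) - 1 = (n : ℤ) from by push_cast; ring,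
      List.append_assoc]
end

section
/- For every n ≥ 0, the singular word w_n is not a factor of w_{n+1}. -/
lemma wpow_zero (w : Word) : wpow w 0 = [] := rfl

lemma count_wpow (w : Word) (k : ℕ) (b : Bool) :
    (wpow w k).count b = k * w.count b := by
  induction k with
  | zero => simp [wpow_zero]
  | succ k ih => rw [wpow_succ, List.count_append, ih]; ring

/-- A factor of `t^k` whose length equals that of `t` has the same count of any
letter as `t` itself. -/
lemma count_of_infix_wpow (t : Word) (k : ℕ) :
    ∀ u : Word, u <:+: wpow t k → u.length = t.length →
      u.count true = t.count true := by
  induction k with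
  | zero =>
    intro u hu hl
    rw [wpow_zero] at hu
    have hu' : u = [] := List.eq_nil_of_infix_nil hu
    have ht : t = [] := by
      have : t.length = 0 := by rw [← hl, hu']; rfl
      exact List.eq_nil_of_length_eq_zero this
    rw [hu', ht]
  | succ k ih =>
    intro u hu hl
    rw [wpow_succ] at hu
    obtain ⟨x, y, hxy⟩ := hu
    by_cases hx : t.length ≤ x.length
    · -- t is a prefix of x
      have h1 : t <+: x ++ (u ++ y) := ⟨wpow t k, by
        rw [← List.append_assoc]; exact hxy.symm⟩
      have h2 : x <+: x ++ (u ++ y) := ⟨u ++ y, rfl⟩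
      have hpx : t <+: x := List.prefix_of_prefix_length_le h1 h2 hx
      obtain ⟨x', rfl⟩ := hpx
      apply ih u _ hl
      refine ⟨x', y, ?_⟩
      have hxy' : t ++ (x' ++ u ++ y) = t ++ wpow t k := by
        simpa [List.append_assoc] using hxy
      have := List.append_cancel_left hxy'
      simpa [List.append_assoc] using this
    · push_neg at hx
      have hxle : x.length ≤ t.length := le_of_lt hx
      -- u ++ y = t.drop x.length ++ wpow t k
      have hxy2 : x ++ (u ++ y) = t ++ wpow t k := by
        simpa [List.append_assoc] using hxy
      have hd : u ++ y = t.drop x.length ++ wpow t k := by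
        have h := congrArg (List.drop x.length) hxy2
        rw [List.drop_left] at h
        rw [List.drop_append, Nat.sub_eq_zero_of_le hxle,
          List.drop_zero] at h
        exact h
      have hu' : u = t.drop x.length ++ (wpow t k).take x.length := by
        have h := congrArg (List.take u.length) hd
        rw [List.take_left] at h
        rw [List.take_append] at h
        rw [List.take_of_length_le (by
          rw [List.length_drop, hl]; omega)] at h
        have hlen : u.length - (t.drop x.length).length = x.length := by
          rw [List.length_drop, hl]; omega
        rw [hlen] at h
        exact h
      cases k with
      | zero =>
        have hx0 : x.length = 0 := by
          have := congrArg List.length hu'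
          rw [List.length_append, List.length_drop] at this
          simp [wpow_zero] at this
          omega
        rw [hu', hx0, wpow_zero]
        simp
      | succ k =>
        have htake : (wpow t (k + 1)).take x.length = t.take x.length := by
          rw [wpow_succ, List.take_append,
            Nat.sub_eq_zero_of_le hxle, List.take_zero, List.append_nil]
        rw [hu', htake, List.count_append]
        have := congrArg (List.count true) (List.take_append_drop x.length t)
        rw [List.count_append] at this
        omega

/-- Last letter of `s n` is `false` for even `n`, `true` for odd `n`. -/
lemma getLast_s (d : ℤ → ℕ) (s : ℤ → Word)
    (hs1 : s (-1) = [true]) (hs0 : s 0 = [false])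
    (hs : ∀ n : ℤ, 1 ≤ n → s n = wpow (s (n - 1)) (d n) ++ s (n - 2)) :
    ∀ n : ℤ, -1 ≤ n → (s n).getLast? = some (if Even n then false else true) := by
  have key : ∀ m : ℕ,
      (s ((m : ℤ) - 1)).getLast? = some (if Even ((m : ℤ) - 1) then false else true) := by
    intro m
    induction m using Nat.strong_induction_on with
    | _ m ih =>
      match m with
      | 0 =>
        have : ¬ Even ((-1 : ℤ)) := by decide
        simpa [hs1, this] using rfl
      | 1 =>
        have h0 : ((1 : ℕ) : ℤ) - 1 = 0 := by norm_num
        rw [h0, hs0]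
        simp
      | (m + 2) =>
        have hn : ((m + 2 : ℕ) : ℤ) - 1 = (m : ℤ) + 1 := by push_cast; ring
        rw [hn]
        have h1 : (1 : ℤ) ≤ (m : ℤ) + 1 := by omega
        have hsn := hs ((m : ℤ) + 1) h1
        have e2 : (m : ℤ) + 1 - 2 = (m : ℤ) - 1 := by ring
        rw [e2] at hsn
        have ihm := ih m (by omega)
        have hne : s ((m : ℤ) - 1) ≠ [] := by
          intro h; rw [h] at ihm; simp at ihm
        rw [hsn, List.getLast?_append_of_ne_nil _ hne, ihm]
        congr 1
        have : Even ((m : ℤ) - 1) ↔ Even ((m : ℤ) + 1) := by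
          rw [Int.even_iff, Int.even_iff]; omega
        by_cases h : Even ((m : ℤ) - 1)
        · rw [if_pos h, if_pos (this.mp h)]
        · rw [if_neg h, if_neg (fun hh => h (this.mpr hh))]
  intro n hn
  obtain ⟨m, rfl⟩ : ∃ m : ℕ, n = (m : ℤ) - 1 := ⟨(n + 1).toNat, by omega⟩
  exact key _

/-- For every `n ≥ 0`, the singular word `wₙ` is not a factor of `wₙ₊₁`. -/
theorem singular_word_not_factor (d : ℤ → ℕ) (s : ℤ → Word)
    (hd : ∀ n : ℤ, 1 ≤ n → 1 ≤ d n)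
    (hs1 : s (-1) = [true]) (hs0 : s 0 = [false])
    (hs : ∀ n : ℤ, 1 ≤ n → s n = wpow (s (n - 1)) (d n) ++ s (n - 2))
    (w : ℤ → Word)
    (hw : ∀ n : ℤ, 0 ≤ n → w n = (if Odd n then [false] else [true]) ++ (s n).dropLast)
    (hwm1 : w (-1) = [false]) (hwm2 : w (-2) = []) :
    ∀ n : ℤ, 0 ≤ n → ¬ (w n <:+: w (n + 1)) := by
  have hQ := getLast_s d s hs1 hs0 hs
  intro n hn hinf
  rcases eq_or_lt_of_le hn with h0 | h1
  · -- case n = 0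
    subst h0
    -- w 0 = [true]
    have hw0 : w 0 = [true] := by
      rw [hw 0 le_rfl, hs0]
      norm_num [Int.odd_iff]
    -- s 1 = wpow [false] (d 1) ++ [true]
    have hs1' : s 1 = wpow (s 0) (d 1) ++ s (-1) := by
      have := hs 1 le_rfl
      norm_num at this
      exact this
    have hw1 : w 1 = [false] ++ wpow [false] (d 1) := by
      rw [hw 1 (by norm_num), hs1', hs0, hs1]
      rw [List.dropLast_concat]
      norm_num [Int.odd_iff]
    rw [show (0:ℤ) + 1 = 1 by norm_num, hw0, hw1] at hinf
    have hmem : true ∈ [false] ++ wpow [false] (d 1) :=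
      hinf.subset (by simp)
    have hcount : ([false] ++ wpow [false] (d 1)).count true = 0 := by
      rw [List.count_append, count_wpow]
      simp
    have := List.count_pos_iff.mpr hmem
    omega
  · -- case 1 ≤ n
    have hn1 : (1 : ℤ) ≤ n := h1
    -- last letter of s n
    have hlast := hQ n (by omega)
    have hne : s n ≠ [] := by intro h; rw [h] at hlast; simp at hlast
    set ℓ : Bool := if Even n then false else true with hℓ
    have hsplit : s n = (s n).dropLast ++ [ℓ] := by
      have h1' := List.dropLast_append_getLast hne
      have h2' : (s n).getLast hne = ℓ := by
        have := List.getLast?_eq_getLast hne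
        rw [this] at hlast
        exact Option.some.inj hlast
      rw [← h2']
      exact h1'.symm
    set α : Bool := if Odd n then false else true with hα
    have hwn : w n = α :: (s n).dropLast := by
      rw [hw n (by omega)]
      rcases Int.even_or_odd n with he | ho
      · simp [hα, Int.not_odd_iff_even.mpr he]
      · simp [hα, ho]
    set β : Bool := if Odd (n + 1) then false else true with hβ
    have hwn1 : w (n + 1) = β :: (s (n + 1)).dropLast := by
      rw [hw (n + 1) (by omega)]
      rcases Int.even_or_odd (n + 1) with he | ho
      · simp [hβ, Int.not_odd_iff_even.mpr he]
      · simp [hβ, ho]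
    have hαβ : α ≠ β := by
      rcases Int.even_or_odd n with he | ho
      · simp [hα, hβ, Int.not_odd_iff_even.mpr he, Even.add_one he]
      · simp [hα, hβ, ho, Int.not_odd_iff_even.mpr (Odd.add_one ho)]
    have hαℓ : α ≠ ℓ := by
      rcases Int.even_or_odd n with he | ho
      · simp [hα, hℓ, Int.not_odd_iff_even.mpr he, he]
      · simp [hα, hℓ, ho, Int.not_even_iff_odd.mpr ho]
    obtain ⟨x, y, hxy⟩ := hinf
    rw [hwn, hwn1] at hxy
    cases x with
    | nil =>
      simp only [List.nil_append, List.cons_append] at hxy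
      exact hαβ (List.head_eq_of_cons_eq hxy)
    | cons γ x' =>
      have hxy' : x' ++ (α :: (s n).dropLast) ++ y = (s (n + 1)).dropLast := by
        have := List.tail_eq_of_cons_eq (by simpa using hxy)
        simpa [List.append_assoc] using this
      -- w n is an infix of s (n+1)
      have hinf2 : (α :: (s n).dropLast) <:+: s (n + 1) := by
        refine List.IsInfix.trans ⟨x', y, hxy'⟩ ?_
        exact (List.dropLast_prefix (s (n + 1))).isInfix
      -- s (n+1) is a prefix of wpow (s n) (d (n+1) + 1)
      have hpre1 : s (n - 1) <+: s n := by
        have hsn := hs n hn1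
        obtain ⟨k, hk⟩ : ∃ k, d n = k + 1 := ⟨d n - 1, by have := hd n hn1; omega⟩
        rw [hsn, hk, wpow_succ]
        exact ⟨wpow (s (n - 1)) k ++ s (n - 2), by simp [List.append_assoc]⟩
      have hpre2 : s (n + 1) <+: wpow (s n) (d (n + 1) + 1) := by
        have hsn1 := hs (n + 1) (by omega)
        have e1 : n + 1 - 1 = n := by ring
        have e2 : n + 1 - 2 = n - 1 := by ring
        rw [e1, e2] at hsn1
        rw [hsn1, wpow_succ']
        obtain ⟨z, hz⟩ := hpre1
        exact ⟨z, by rw [List.append_assoc, hz]⟩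
      have hinf3 : (α :: (s n).dropLast) <:+: wpow (s n) (d (n + 1) + 1) :=
        hinf2.trans hpre2.isInfix
      have hlen : (α :: (s n).dropLast).length = (s n).length := by
        rw [List.length_cons, List.length_dropLast]
        have : 0 < (s n).length := List.length_pos_iff.mpr hne
        omega
      have hcount := count_of_infix_wpow (s n) (d (n + 1) + 1) _ hinf3 hlen
      -- but counts differ by exactly one
      have hcw : (α :: (s n).dropLast).count true
          = ([α] : Word).count true + ((s n).dropLast).count true := by
        rw [show α :: (s n).dropLast = [α] ++ (s n).dropLast from rfl,
          List.count_append]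
      have hcs : (s n).count true
          = ((s n).dropLast).count true + ([ℓ] : Word).count true := by
        conv_lhs => rw [hsplit]
        rw [List.count_append]
      have c1 : ([true] : Word).count true = 1 := by decide
      have c0 : ([false] : Word).count true = 0 := by decide
      rcases Bool.eq_false_or_eq_true α with hα' | hα'
      · have hℓ' : ℓ = false := by
          rcases Bool.eq_false_or_eq_true ℓ with h | h
          · exact absurd (hα'.trans h.symm) hαℓ
          · exact h
        rw [hα'] at hcw hcount
        rw [hℓ'] at hcs
        rw [c1] at hcw
        rw [c0] at hcs
        omega
      · have hℓ' : ℓ = true := by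
          rcases Bool.eq_false_or_eq_true ℓ with h | h
          · exact h
          · exact absurd (hα'.trans h.symm) hαℓ
        rw [hα'] at hcw hcount
        rw [hℓ'] at hcs
        rw [c0] at hcw
        rw [c1] at hcs
        omega
end

section
/- For every n ≥ 0, the adjoining singular word v_{n-1} is not a factor of the singular word w_n. -/
lemma length_wpow (w : Word) (k : ℕ) : (wpow w k).length = k * w.length := by
  induction k with
  | zero => simp [wpow_zero]
  | succ k ih => rw [wpow_succ, List.length_append, ih]; ring

/-- any window of length `t.length` inside `wpow t k` is a rotation of `t`. -/
lemma window_rotation (t : Word) : ∀ (k i : ℕ), i + t.length ≤ (wpow t k).length →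
    ∃ j ≤ t.length, ((wpow t k).drop i).take t.length = t.drop j ++ t.take j := by
  intro k
  induction k with
  | zero =>
    intro i h
    rw [wpow_zero] at h ⊢
    simp only [List.length_nil] at h
    have ht : t.length = 0 := by omega
    exact ⟨0, by simp [List.eq_nil_of_length_eq_zero ht]⟩
  | succ k ih =>
    intro i h
    rw [wpow_succ]
    rw [length_wpow] at h
    have hexp : (k+1) * t.length = k * t.length + t.length := by ring
    by_cases hi : t.length ≤ i
    · rw [List.drop_append, List.drop_eq_nil_of_le hi, List.nil_append]
      refine ih (i - t.length) ?_
      rw [length_wpow]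
      omega
    · push_neg at hi
      rw [List.drop_append_of_le_length (le_of_lt hi)]
      refine ⟨i, le_of_lt hi, ?_⟩
      rw [List.take_append]
      have hdl : (t.drop i).length = t.length - i := by simp
      rw [List.take_of_length_le (by omega), hdl]
      congr 1
      rcases k with _ | k
      · have h0 : i = 0 := by omega
        simp [h0]
      · rw [wpow_succ, List.take_append_of_le_length (by omega),
          show t.length - (t.length - i) = i by omega]

lemma count_window (t x : Word) {k : ℕ} (hinf : x <:+: wpow t k) (hlen : x.length = t.length) :
    x.count true = t.count true := by
  obtain ⟨p, q, hpq⟩ := hinf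
  have hbound : p.length + t.length ≤ (wpow t k).length := by
    rw [← hpq]; simp; omega
  obtain ⟨j, hj, hrot⟩ := window_rotation t k p.length hbound
  have hx : ((wpow t k).drop p.length).take t.length = x := by
    rw [← hpq, List.append_assoc, List.drop_left, ← hlen, List.take_left]
  rw [← hx, hrot, List.count_append]
  conv_rhs => rw [← List.take_append_drop j t, List.count_append]
  omega

lemma prefix_dropLast {x y : Word} (h : x <+: y) (hl : x.length < y.length) :
    x.dropLast <+: y.dropLast := by
  obtain ⟨r, rfl⟩ := h
  have hr : r ≠ [] := by
    intro h0
    simp [h0] at hl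
  rw [List.dropLast_append_of_ne_nil hr]
  exact (List.dropLast_prefix x).trans (List.prefix_append x r.dropLast)

/-- For every `n ≥ 0`, the adjoining singular word `vₙ₋₁` is not a factor of `wₙ`. -/
theorem adjoining_singular_word_not_factor (d : ℤ → ℕ) (s : ℤ → Word)
    (hd : ∀ n : ℤ, 1 ≤ n → 1 ≤ d n)
    (hs1 : s (-1) = [true]) (hs0 : s 0 = [false])
    (hs : ∀ n : ℤ, 1 ≤ n → s n = wpow (s (n - 1)) (d n) ++ s (n - 2))
    (w : ℤ → Word)
    (hw : ∀ n : ℤ, 0 ≤ n → w n = (if Odd n then [false] else [true]) ++ (s n).dropLast)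
    (hwm1 : w (-1) = [false]) (hwm2 : w (-2) = [])
    (v : ℤ → Word)
    (hv : ∀ n : ℤ, -1 ≤ n → v n = (if Odd n then [false] else [true]) ++ (wpow (s (n + 1)) (d (n + 2) - 1) ++ s n).dropLast)
    (hvm2 : v (-2) = []) :
    ∀ n : ℤ, 0 ≤ n → ¬ (v (n - 1) <:+: w n) := by
  -- basic facts about s : nonemptiness and last letter
  have key : ∀ m : ℤ, -1 ≤ m →
      (s m ≠ [] ∧ (s m).getLast? = some (if Even m then false else true)) ∧
      (s (m+1) ≠ [] ∧ (s (m+1)).getLast? = some (if Even (m+1) then false else true)) := by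
    intro m
    refine Int.le_induction (motive := fun m _ => (s m ≠ [] ∧ (s m).getLast? = some (if Even m then false else true)) ∧
      (s (m+1) ≠ [] ∧ (s (m+1)).getLast? = some (if Even (m+1) then false else true))) ?_ ?_ m
    · constructor
      · rw [hs1]; refine ⟨by simp, ?_⟩
        have : ¬ Even (-1 : ℤ) := by decide
        simp [this]
      · norm_num [hs0]
    · intro m hm ih
      refine ⟨ih.2, ?_⟩
      have h2 : s (m + 1 + 1) = wpow (s (m + 1)) (d (m + 1 + 1)) ++ s m := by
        have h3 := hs (m + 2) (by omega)
        rw [show m + 2 - 1 = m + 1 by ring, show m + 2 - 2 = m by ring] at h3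
        rw [show m + 1 + 1 = m + 2 by ring, h3]
      have hmne := ih.1.1
      constructor
      · rw [h2]; simp [hmne]
      · rw [h2, List.getLast?_append_of_ne_nil _ hmne, ih.1.2]
        have hpar : Even (m + 1 + 1) ↔ Even m := by
          rw [Int.even_iff, Int.even_iff]; omega
        rw [if_congr hpar rfl rfl]
  have sne : ∀ m : ℤ, -1 ≤ m → s m ≠ [] := fun m hm => (key m hm).1.1
  have slast : ∀ m : ℤ, -1 ≤ m →
      (s m).getLast? = some (if Even m then false else true) := fun m hm => (key m hm).1.2
  have slen : ∀ m : ℤ, -1 ≤ m → 1 ≤ (s m).length := by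
    intro m hm
    have h := sne m hm
    cases hsm : s m with
    | nil => exact absurd hsm h
    | cons a l => simp [hsm]
  -- prefix fact: s (m-1) is a strict prefix of s m for m ≥ 1
  have spre : ∀ m : ℤ, 1 ≤ m → s (m - 1) <+: s m ∧ (s (m-1)).length < (s m).length := by
    intro m hm
    have h1 := hs m hm
    have hd1 := hd m hm
    have h2 : wpow (s (m-1)) (d m) = s (m-1) ++ wpow (s (m-1)) (d m - 1) := by
      rw [← wpow_succ, Nat.sub_add_cancel hd1]
    constructor
    · exact ⟨wpow (s (m-1)) (d m - 1) ++ s (m-2), by rw [h1, h2]; simp⟩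
    · rw [h1, List.length_append, length_wpow]
      have hl2 := slen (m - 2) (by omega)
      have hl1 := slen (m - 1) (by omega)
      nlinarith
  -- dropLast of prefixes
  have dlpre : ∀ m : ℤ, 0 ≤ m → (s (m-1)).dropLast <+: (s m).dropLast := by
    intro m hm
    rcases eq_or_lt_of_le hm with h0 | h1
    · rw [← h0]
      norm_num [hs1]
    · have h1 : (1:ℤ) ≤ m := h1
      obtain ⟨hp, hl⟩ := spre m h1
      exact prefix_dropLast hp hl
  -- now the main proof
  intro n hn hinf
  have hlenw : (w n).length = (s n).length := by
    rw [hw n hn, List.length_append, List.length_dropLast]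
    have := slen n (by omega)
    have : (if Odd n then ([false]:Word) else [true]).length = 1 := by
      by_cases h : Odd n <;> simp [h]
    omega
  have hvn : v (n-1) = (if Odd (n-1) then [false] else [true]) ++
      (wpow (s n) (d (n+1) - 1) ++ s (n-1)).dropLast := by
    have h := hv (n-1) (by omega)
    rw [show n - 1 + 1 = n by ring, show n - 1 + 2 = n + 1 by ring] at h
    exact h
  have hd1 : 1 ≤ d (n+1) := hd (n+1) (by omega)
  by_cases hD : 2 ≤ d (n+1)
  · -- length contradiction
    have hlen := hinf.length_le
    have hlsn := slen n (by omega)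
    have hlsn1 := slen (n-1) (by omega)
    have hvlen : (v (n-1)).length =
        (if Odd (n-1) then ([false]:Word) else [true]).length +
        ((d (n+1) - 1) * (s n).length + (s (n-1)).length - 1) := by
      rw [hvn, List.length_append, List.length_dropLast, List.length_append, length_wpow]
    have hone : (if Odd (n-1) then ([false]:Word) else [true]).length = 1 := by
      by_cases h : Odd (n-1) <;> simp [h]
    have hmul : (s n).length ≤ (d (n+1) - 1) * (s n).length :=
      Nat.le_mul_of_pos_left _ (by omega)
    omega
  · -- d (n+1) = 1 : the real case
    have hDeq : d (n+1) = 1 := by omega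
    rw [hDeq] at hvn
    simp only [Nat.sub_self, wpow_zero, List.nil_append] at hvn
    rcases eq_or_lt_of_le hn with h0 | hpos
    · -- n = 0
      rw [← h0] at hinf hvn
      have hodd : Odd ((0:ℤ) - 1) := by decide
      rw [hvn] at hinf
      norm_num [hodd, hs1] at hinf
      rw [hw 0 le_rfl] at hinf
      have : ¬ Odd (0:ℤ) := by decide
      rw [if_neg this, hs0] at hinf
      have := hinf.subset (by simp : false ∈ [false])
      simp at this
    · have hn1 : (1:ℤ) ≤ n := hpos
      -- the letter c = last letter of s (n-1)
      set c : Bool := if Even (n-1) then false else true with hc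
      have hparn : Odd n ↔ Even (n-1) := by
        rw [Int.odd_iff, Int.even_iff]; omega
      have hparn1 : Odd (n-1) ↔ ¬ Even (n-1) := by
        rw [Int.odd_iff, Int.even_iff]; omega
      have hcw : (if Odd n then ([false]:Word) else [true]) = [c] := by
        by_cases h : Even (n-1)
        · rw [if_pos (hparn.mpr h), hc, if_pos h]
        · rw [if_neg (fun ho => h (hparn.mp ho)), hc, if_neg h]
      have hcv : (if Odd (n-1) then ([false]:Word) else [true]) = [!c] := by
        by_cases h : Even (n-1)
        · rw [if_neg (fun ho => (hparn1.mp ho) h), hc, if_pos h]; rfl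
        · rw [if_pos (hparn1.mpr h), hc, if_neg h]; rfl
      set S : Word := s (n-1) with hS
      have hSne : S ≠ [] := sne (n-1) (by omega)
      have hSlen : 1 ≤ S.length := slen (n-1) (by omega)
      have hSlast : S.getLast? = some c := slast (n-1) (by omega)
      have hSD : S.dropLast ++ [c] = S :=
        List.dropLast_append_getLast? c (by rw [hSlast]; rfl)
      set t : Word := c :: S.dropLast with ht
      have htlen : t.length = S.length := by
        rw [ht, List.length_cons, List.length_dropLast]; omega
      have hK1 : t ++ [c] = [c] ++ S := by
        rw [ht, List.cons_append, List.singleton_append, hSD]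
      have hK2 : ∀ k : ℕ, wpow t k ++ [c] = [c] ++ wpow S k := by
        intro k
        induction k with
        | zero => simp [wpow_zero]
        | succ k ih =>
          rw [wpow_succ, wpow_succ, List.append_assoc, ih, ← List.append_assoc,
            ← List.append_assoc, hK1, List.append_assoc]
      -- decomposition of w n
      have hsn : s n = wpow S (d n) ++ s (n-2) := hs n hn1
      have hsn2ne : s (n-2) ≠ [] := sne (n-2) (by omega)
      have hwn : w n = wpow t (d n) ++ ([c] ++ (s (n-2)).dropLast) := by
        rw [hw n hn, hcw, hsn, List.dropLast_append_of_ne_nil hsn2ne,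
          ← List.append_assoc, ← hK2, List.append_assoc]
      -- w n is a prefix of wpow t (d n + 1)
      have hrt : [c] ++ (s (n-2)).dropLast <+: t := by
        have h := dlpre (n-1) (by omega)
        rw [show n - 1 - 1 = n - 2 by ring, ← hS] at h
        obtain ⟨r, hr⟩ := h
        exact ⟨r, by rw [ht, List.singleton_append, List.cons_append, hr]⟩
      have hwpre : w n <+: wpow t (d n + 1) := by
        obtain ⟨r, hr⟩ := hrt
        refine ⟨r, ?_⟩
        rw [hwn, wpow_succ', List.append_assoc, hr]
      -- conclude
      have hinf2 : v (n-1) <:+: wpow t (d n + 1) := hinf.trans hwpre.isInfix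
      rw [hvn, hcv] at hinf2
      have hlenv : ([!c] ++ S.dropLast).length = t.length := by
        rw [List.length_append, List.length_dropLast, htlen]
        simp; omega
      have hcnt := count_window t _ hinf2 hlenv
      rw [List.singleton_append, ht] at hcnt
      rw [List.count_cons, List.count_cons] at hcnt
      rcases Bool.eq_false_or_eq_true c with hcc | hcc <;> rw [hcc] at hcnt <;>
        simp at hcnt <;> omega
end
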